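/- Let a be a final subword of the concatenation c·d (up to permutation by swaps of adjacent commuting letters) such that every end of a commutes with d. Then a commutes with d and a is a final subword of c. -/

import Mathlib

variable {V : Type*} [DecidableEq V] [Fintype V]

/-- A letter is a nonempty connected subset of the graph `G`
(connectedness of the induced subgraph includes nonemptiness). -/
def IsLetter (G : SimpleGraph V) (s : Finset V) : Prop :=
  (G.induce (↑s : Set V)).Connected

/-- The type of letters of `G`. -/
def Letter (G : SimpleGraph V) := {s : Finset V // IsLetter G s}

/-- A word is a finite sequence of letters. -/
abbrev Word (G : SimpleGraph V) := List (Letter G)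

/-- Two letters commute iff their union is not a letter (is disconnected). -/
def LCommute (G : SimpleGraph V) (s t : Letter G) : Prop :=
  ¬ IsLetter G (s.1 ∪ t.1)

/-- Two words commute if their letters pairwise commute. -/
def WCommute (G : SimpleGraph V) (u v : Word G) : Prop :=
  ∀ s ∈ u, ∀ t ∈ v, LCommute G s t

/-- One swap of two adjacent commuting letters. -/
def LSwapStep (G : SimpleGraph V) (w w' : Word G) : Prop :=
  ∃ (a b : Word G) (s t : Letter G), LCommute G s t ∧
    w = a ++ s :: t :: b ∧ w' = a ++ t :: s :: b

/-- Equivalence (`≈`) of words: sequences of swaps of adjacent commuting letters. -/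
def WEquiv (G : SimpleGraph V) : Word G → Word G → Prop :=
  Relation.ReflTransGen (LSwapStep G)

/-- A word is reduced if there is no pair of comparable letters such that the
smaller one commutes with all letters strictly in between. -/
def WIsReduced (G : SimpleGraph V) (w : Word G) : Prop :=
  ¬ ∃ (a b c : Word G) (s t : Letter G),
      w = a ++ s :: (b ++ t :: c) ∧
      ((s.1 ⊆ t.1 ∧ ∀ r ∈ b, LCommute G s r) ∨
       (t.1 ⊆ s.1 ∧ ∀ r ∈ b, LCommute G t r))

/-- A splitting of a letter `s`: a (possibly empty) word whose letters are
proper subsets of `s`. -/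
def IsSplitting (G : SimpleGraph V) (x : Word G) (s : Letter G) : Prop :=
  ∀ t ∈ x, t.1 ⊂ s.1

/-- `SplitStep G u v`: `u` is obtained from `v` by replacing one occurrence of a
letter by a splitting of it. -/
def SplitStep (G : SimpleGraph V) (u v : Word G) : Prop :=
  ∃ (a b x : Word G) (s : Letter G),
    v = a ++ s :: b ∧ IsSplitting G x s ∧ u = a ++ x ++ b

/-- One step of the splitting order up to equivalence. -/
def PrecStep (G : SimpleGraph V) (u v : Word G) : Prop :=
  ∃ u' v', WEquiv G v v' ∧ SplitStep G u' v' ∧ WEquiv G u u'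

/-- The splitting order `≺` on words. -/
def WPrec (G : SimpleGraph V) : Word G → Word G → Prop :=
  Relation.TransGen (PrecStep G)

/-- `u ≼ v` : `u ≺ v` or `u ≈ v`. -/
def WPreceq (G : SimpleGraph V) (u v : Word G) : Prop :=
  WPrec G u v ∨ WEquiv G u v

/-- Absorption: if `s ⊆ t`, replace a subword `s·t` (or `t·s`) by `t`. -/
def AbsorbStep (G : SimpleGraph V) (w w' : Word G) : Prop :=
  ∃ (a b : Word G) (s t : Letter G), s.1 ⊆ t.1 ∧
    (w = a ++ s :: t :: b ∨ w = a ++ t :: s :: b) ∧ w' = a ++ t :: b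

/-- A non-splitting reduction step: Commutation or Absorption. -/
def NSStep (G : SimpleGraph V) (w w' : Word G) : Prop :=
  LSwapStep G w w' ∨ AbsorbStep G w w'

/-- `NSRed G u v`: `v` is a non-splitting reduction of `u`, i.e. a reduced word
obtained from `u` by Commutation and Absorption steps only. -/
def NSRed (G : SimpleGraph V) (u v : Word G) : Prop :=
  Relation.ReflTransGen (NSStep G) u v ∧ WIsReduced G v

/-- The letter `t` is left-absorbed by the word `w`: `t` is contained in some
letter of `w` and commutes with all earlier letters. -/
def LetterLeftAbsorbed (G : SimpleGraph V) (t : Letter G) (w : Word G) : Prop :=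
  ∃ (a b : Word G) (s : Letter G), w = a ++ s :: b ∧ t.1 ⊆ s.1 ∧ ∀ r ∈ a, LCommute G t r

/-- The letter `t` is right-absorbed by the word `w`. -/
def LetterRightAbsorbed (G : SimpleGraph V) (t : Letter G) (w : Word G) : Prop :=
  ∃ (a b : Word G) (s : Letter G), w = a ++ s :: b ∧ t.1 ⊆ s.1 ∧ ∀ r ∈ b, LCommute G t r

/-- The letter `t` is properly left-absorbed by the word `w`. -/
def LetterProperLeftAbsorbed (G : SimpleGraph V) (t : Letter G) (w : Word G) : Prop :=
  ∃ (a b : Word G) (s : Letter G), w = a ++ s :: b ∧ t.1 ⊂ s.1 ∧ ∀ r ∈ a, LCommute G t r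

/-- The letter `t` is properly right-absorbed by the word `w`. -/
def LetterProperRightAbsorbed (G : SimpleGraph V) (t : Letter G) (w : Word G) : Prop :=
  ∃ (a b : Word G) (s : Letter G), w = a ++ s :: b ∧ t.1 ⊂ s.1 ∧ ∀ r ∈ b, LCommute G t r

/-- A word `u` is left-absorbed by `w` if each of its letters is. -/
def LeftAbsorbed (G : SimpleGraph V) (u w : Word G) : Prop :=
  ∀ t ∈ u, LetterLeftAbsorbed G t w

/-- A word `u` is right-absorbed by `w` if each of its letters is. -/
def RightAbsorbed (G : SimpleGraph V) (u w : Word G) : Prop :=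
  ∀ t ∈ u, LetterRightAbsorbed G t w

/-- A word `u` is properly left-absorbed by `w` if each of its letters is. -/
def ProperLeftAbsorbed (G : SimpleGraph V) (u w : Word G) : Prop :=
  ∀ t ∈ u, LetterProperLeftAbsorbed G t w

/-- A word `u` is properly right-absorbed by `w` if each of its letters is. -/
def ProperRightAbsorbed (G : SimpleGraph V) (u w : Word G) : Prop :=
  ∀ t ∈ u, LetterProperRightAbsorbed G t w

/-- A commuting word: its letters pairwise commute. -/
def IsCommuting (G : SimpleGraph V) (u : Word G) : Prop :=
  List.Pairwise (LCommute G) u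

/-- The letter `s` is an end of the word `u` if `u ≈ v·s` for some `v`. -/
def IsEnd (G : SimpleGraph V) (s : Letter G) (u : Word G) : Prop :=
  ∃ v, WEquiv G u (v ++ [s])

/-- `t` is the final segment of `u`: the commuting word consisting of all ends of `u`. -/
def IsFinalSegment (G : SimpleGraph V) (t u : Word G) : Prop :=
  IsCommuting G t ∧ ∀ s, s ∈ t ↔ IsEnd G s u

section AuxFS

variable {G : SimpleGraph V}

lemma lcommute_symm' {s t : Letter G} (h : LCommute G s t) : LCommute G t s := by
  unfold LCommute at *
  rwa [Finset.union_comm]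

lemma lcommute_irrefl' (s : Letter G) : ¬ LCommute G s s := by
  unfold LCommute
  rw [Finset.union_self]
  exact not_not_intro s.2

lemma lswap_symm' {w w' : Word G} (h : LSwapStep G w w') : LSwapStep G w' w := by
  obtain ⟨a, b, s, t, hc, h1, h2⟩ := h
  exact ⟨a, b, t, s, lcommute_symm' hc, h2, h1⟩

lemma wequiv_refl' (w : Word G) : WEquiv G w w := Relation.ReflTransGen.refl

lemma wequiv_symm' {u v : Word G} (h : WEquiv G u v) : WEquiv G v u :=
  by
    induction h with
    | refl => exact Relation.ReflTransGen.refl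
    | tail _ hs ih => exact Relation.ReflTransGen.head (lswap_symm' hs) ih

lemma wequiv_step' {u v : Word G} (h : LSwapStep G u v) : WEquiv G u v :=
  Relation.ReflTransGen.single h

/-- Move a letter commuting with everything after it to the end. -/
lemma move_right' (r : Letter G) :
    ∀ (w₂ w₁ : Word G), (∀ t ∈ w₂, LCommute G r t) →
      WEquiv G (w₁ ++ r :: w₂) (w₁ ++ w₂ ++ [r])
  | [], w₁, _ => by simpa using wequiv_refl' _
  | t :: w₂, w₁, h => by
    have step : LSwapStep G (w₁ ++ r :: t :: w₂) (w₁ ++ t :: r :: w₂) :=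
      ⟨w₁, w₂, r, t, h t (by simp), rfl, rfl⟩
    have ih := move_right' r w₂ (w₁ ++ [t]) (fun x hx => h x (by simp [hx]))
    refine Relation.ReflTransGen.head step ?_
    simpa [WEquiv] using ih

/-- Key lemma: tracking the last letter through an equivalence. -/
lemma key_lemma' {u : Word G} {r : Letter G} {w : Word G}
    (h : WEquiv G (u ++ [r]) w) :
    ∃ w₁ w₂, w = w₁ ++ r :: w₂ ∧ (∀ t ∈ w₂, LCommute G r t) ∧ WEquiv G u (w₁ ++ w₂) := by
  induction h with
  | refl => exact ⟨u, [], rfl, by simp, by simpa using wequiv_refl' u⟩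
  | tail _ step ih =>
    obtain ⟨w₁, w₂, rfl, hcomm, hu⟩ := ih
    obtain ⟨A, B, s, t, hst, heq, rfl⟩ := step
    rcases List.append_eq_append_iff.mp heq with ⟨a', hA, hrest⟩ | ⟨c', hw₁, hrest⟩
    · cases a' with
      | nil =>
        simp only [List.nil_append] at hrest hA
        obtain ⟨rfl, rfl⟩ : s = r ∧ w₂ = t :: B := by
          constructor <;> [exact (List.cons_eq_cons.mp hrest).1.symm;
            exact (List.cons_eq_cons.mp hrest).2]
        subst hA
        refine ⟨w₁ ++ [t], B, by simp, fun x hx => hcomm x (by simp [hx]), ?_⟩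
        simpa using hu
      | cons x a'' =>
        simp only [List.cons_append, List.cons.injEq] at hrest
        obtain ⟨rfl, rfl⟩ := hrest
        subst hA
        refine ⟨w₁, a'' ++ t :: s :: B, by simp, ?_, ?_⟩
        · intro y hy
          apply hcomm
          simp only [List.mem_append, List.mem_cons] at hy ⊢
          tauto
        · refine Relation.ReflTransGen.tail (b := w₁ ++ a'' ++ s :: t :: B) (by simpa [WEquiv] using hu) ?_
          exact ⟨w₁ ++ a'', B, s, t, hst, by simp, by simp⟩
    · match c', hrest with
      | [], hrest =>
        simp only [List.nil_append] at hrest hw₁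
        obtain ⟨rfl, rfl⟩ : s = r ∧ w₂ = t :: B := by
          constructor <;> [exact (List.cons_eq_cons.mp hrest.symm).1.symm;
            exact (List.cons_eq_cons.mp hrest.symm).2]
        subst hw₁
        refine ⟨A ++ [t], B, by simp, fun x hx => hcomm x (by simp [hx]), ?_⟩
        simpa using hu
      | [x], hrest =>
        simp only [List.cons_append, List.nil_append, List.cons.injEq] at hrest
        obtain ⟨h1, h2, h3⟩ := hrest
        refine ⟨A, s :: B, by rw [h2], ?_, ?_⟩
        · intro y hy
          rcases List.mem_cons.mp hy with rfl | hy
          · rw [h2] at hst; exact lcommute_symm' hst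
          · exact hcomm y (h3 ▸ hy)
        · rw [hw₁, ← h3, ← h1] at hu
          simpa using hu
      | x :: y :: c'', hrest =>
        simp only [List.cons_append, List.cons.injEq] at hrest
        obtain ⟨h1, h2, h3⟩ := hrest
        subst h3
        rw [← h1, ← h2] at hw₁
        subst hw₁
        refine ⟨A ++ t :: s :: c'', w₂, by simp, fun z hz => hcomm z (by simp [hz]), ?_⟩
        refine Relation.ReflTransGen.tail (b := A ++ s :: t :: c'' ++ w₂) (by simpa [WEquiv] using hu) ?_
        exact ⟨A, c'' ++ w₂, s, t, hst, by simp, by simp⟩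

/-- Characterization of being an end. -/
lemma isEnd_iff' {r : Letter G} {u : Word G} :
    IsEnd G r u ↔ ∃ w₁ w₂, u = w₁ ++ r :: w₂ ∧ ∀ t ∈ w₂, LCommute G r t := by
  constructor
  · rintro ⟨v, hv⟩
    obtain ⟨w₁, w₂, h1, h2, _⟩ := key_lemma' (wequiv_symm' hv)
    exact ⟨w₁, w₂, h1, h2⟩
  · rintro ⟨w₁, w₂, rfl, h⟩
    exact ⟨w₁ ++ w₂, move_right' r w₂ w₁ h⟩

/-- Right cancellation. -/
lemma cancel_right' {u v : Word G} {r : Letter G}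
    (h : WEquiv G (u ++ [r]) (v ++ [r])) : WEquiv G u v := by
  obtain ⟨w₁, w₂, heq, hcomm, hu⟩ := key_lemma' h
  rcases List.append_eq_append_iff.mp heq.symm with ⟨a', hA, hrest⟩ | ⟨c', hw₁, hrest⟩
  · cases a' with
    | nil =>
      simp only [List.append_nil] at hA
      obtain ⟨-, h2⟩ := List.cons_eq_cons.mp hrest
      subst hA
      rw [h2] at hu
      simpa using hu
    | cons x a'' =>
      obtain ⟨-, h2⟩ := List.cons_eq_cons.mp hrest
      exact absurd (hcomm r (by rw [h2]; simp)) (lcommute_irrefl' r)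
  · cases c' with
    | nil =>
      simp only [List.nil_append] at hrest
      obtain ⟨-, h2⟩ := List.cons_eq_cons.mp hrest
      simp only [List.append_nil] at hw₁
      subst hw₁
      rw [← h2] at hu
      simpa using hu
    | cons x c'' =>
      exfalso
      have hl := congrArg List.length hrest
      simp at hl

/-- Splitting ends of a concatenation. -/
lemma isEnd_append' {r : Letter G} {u v : Word G} (h : IsEnd G r (u ++ v)) :
    IsEnd G r v ∨ (IsEnd G r u ∧ ∀ t ∈ v, LCommute G r t) := by
  obtain ⟨w₁, w₂, heq, hcomm⟩ := isEnd_iff'.mp h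
  rcases List.append_eq_append_iff.mp heq with ⟨a', hA, hrest⟩ | ⟨c', hw₁, hrest⟩
  · left
    exact isEnd_iff'.mpr ⟨a', w₂, hrest, hcomm⟩
  · cases c' with
    | nil =>
      left
      simp only [List.append_nil] at hw₁
      subst hw₁
      simp only [List.nil_append] at hrest
      exact isEnd_iff'.mpr ⟨[], w₂, by simp [hrest], hcomm⟩
    | cons x c'' =>
      right
      obtain ⟨rfl, h2⟩ := List.cons_eq_cons.mp hrest
      constructor
      · exact isEnd_iff'.mpr ⟨w₁, c'', hw₁, fun y hy => hcomm y (by simp [h2, hy])⟩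
      · intro t ht
        exact hcomm t (by simp [h2, ht])

lemma lswap_append_right' {u v : Word G} (x : Word G) (h : LSwapStep G u v) :
    LSwapStep G (u ++ x) (v ++ x) := by
  obtain ⟨a, b, s, t, hc, h1, h2⟩ := h
  exact ⟨a, b ++ x, s, t, hc, by simp [h1], by simp [h2]⟩

lemma wequiv_append_right' {u v : Word G} (x : Word G) (h : WEquiv G u v) :
    WEquiv G (u ++ x) (v ++ x) :=
  Relation.ReflTransGen.lift (· ++ x) (fun _ _ hs => lswap_append_right' x hs) _ _ h

end AuxFS

/-- If `a` is a final subword of `c·d` and every end of `a` commutes with `d`,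
then `a` commutes with `d` and `a` is a final subword of `c`. -/
theorem final_subword_of_append (G : SimpleGraph V) (a c d : Word G)
    (hfin : ∃ w, WEquiv G (c ++ d) (w ++ a))
    (hends : ∀ s : Letter G, IsEnd G s a → ∀ t ∈ d, LCommute G s t) :
    WCommute G a d ∧ ∃ w, WEquiv G c (w ++ a) := by
  revert hfin hends
  induction d using List.reverseRecOn with
  | nil =>
    intro hfin _
    refine ⟨fun s _ t ht => absurd ht List.not_mem_nil, ?_⟩
    simpa using hfin
  | append_singleton d' r ih =>
    intro hfin hends
    obtain ⟨w, hw⟩ := hfin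
    have hend_r : IsEnd G r (w ++ a) :=
      ⟨c ++ d', by apply wequiv_symm'; simpa [List.append_assoc] using hw⟩
    rcases isEnd_append' hend_r with hra | ⟨hrw, hcomm_a⟩
    · exact absurd (hends r hra r (by simp)) (lcommute_irrefl' r)
    · obtain ⟨w', hw'⟩ := hrw
      have h1 : WEquiv G ((c ++ d') ++ [r]) ((w' ++ a) ++ [r]) := by
        have e0 : WEquiv G ((c ++ d') ++ [r]) (w ++ a) := by
          simpa [List.append_assoc] using hw
        have e1 : WEquiv G (w ++ a) (w' ++ r :: a) := by
          simpa [List.append_assoc] using wequiv_append_right' a hw'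
        have e2 : WEquiv G (w' ++ r :: a) ((w' ++ a) ++ [r]) :=
          move_right' r a w' hcomm_a
        exact (e0.trans e1).trans e2
      have h2 := cancel_right' h1
      obtain ⟨hc1, hc2⟩ := ih ⟨w', h2⟩ (fun s hs t ht => hends s hs t (by simp [ht]))
      refine ⟨?_, hc2⟩
      intro s hs t ht
      rcases List.mem_append.mp ht with ht | ht
      · exact hc1 s hs t ht
      · rw [List.mem_singleton.mp ht]
        exact lcommute_symm' (hcomm_a s hs)
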